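/- Let 𝔛 be a classical configuration with exactly one empty colour, with Γ_𝔛 connected, and suppose there exists a nontrivial automorphism φ of 𝔛 all of whose nontrivial powers are fixed-point-free; choose such φ with |⟨φ⟩| minimal. Then WL(𝔛) ≥ log₂(diam Γ_𝔛) − log₂(|⟨φ⟩| − 1) − 3. -/

import Mathlib

universe u v

/-- The type of colours after `k` Weisfeiler-Leman iterations. -/
def WLColor (C : Type v) : ℕ → Type v
  | 0 => C
  | k + 1 => WLColor C k × (WLColor C k → WLColor C k → ℕ)

/-- The Weisfeiler-Leman iterated colouring. -/
noncomputable def WLiter {Γ : Type u} {C : Type v} (c : Γ → Γ → C) :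
    (k : ℕ) → Γ → Γ → WLColor C k
  | 0 => c
  | k + 1 => fun v₁ v₂ =>
      (WLiter c k v₁ v₂,
        fun c₁ c₂ => Nat.card {w : Γ // WLiter c k v₁ w = c₁ ∧ WLiter c k w v₂ = c₂})

/-- The number of nontrivial Weisfeiler-Leman iterations: the first `k` at which
the step `k → k+1` does not refine the partition of `Γ × Γ`. -/
noncomputable def WLnum {Γ : Type u} {C : Type v} (c : Γ → Γ → C) : ℕ :=
  sInf {k | ∀ v₁ v₂ u₁ u₂ : Γ,
    WLiter c (k + 1) v₁ v₂ = WLiter c (k + 1) u₁ u₂ ↔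
      WLiter c k v₁ v₂ = WLiter c k u₁ u₂}

/-- A colour is nonempty if each vertex has at most one outgoing edge of that colour. -/
def NonemptyColor {Γ : Type u} {C : Type v} (c : Γ → Γ → C) (c₀ : C) : Prop :=
  ∀ v w w' : Γ, c v w = c₀ → c v w' = c₀ → w = w'

/-- Existence of a directed walk of length `n`. -/
def dWalk {Γ : Type u} (R : Γ → Γ → Prop) : ℕ → Γ → Γ → Prop
  | 0, v, w => v = w
  | n + 1, v, w => ∃ u, R v u ∧ dWalk R n u w

/-- Directed graph distance. -/
noncomputable def ddist {Γ : Type u} (R : Γ → Γ → Prop) (v w : Γ) : ℕ :=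
  sInf {n | dWalk R n v w}

/-- Diameter of a directed graph. -/
noncomputable def ddiam {Γ : Type u} (R : Γ → Γ → Prop) : ℕ :=
  sSup (Set.range fun p : Γ × Γ => ddist R p.1 p.2)

/-- `ColorWalk c x y cs ws` means `ws` is the list of intermediate vertices of a walk from
`x` to `y` whose consecutive edges have the colours listed in `cs`. -/
def ColorWalk {Γ : Type u} {C : Type v} (c : Γ → Γ → C) :
    Γ → Γ → List C → List Γ → Prop
  | x, y, [d], [] => c x y = d
  | x, y, d :: ds, u :: us => c x u = d ∧ ColorWalk c u y ds us
  | _, _, _, _ => False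

/-- Lower bound on the number of nontrivial Weisfeiler-Leman iterations:
`WL(𝔛) ≥ log₂ (diam Γ_𝔛) − log₂(|⟨φ⟩| − 1) − 3` for a fixed-point-free automorphism `φ`
of minimal order. -/
theorem WL_lower_bound {Γ : Type u} {C : Type v} [Finite Γ] (c : Γ → Γ → C)
    (hi : ∀ (c₀ : C) (v : Γ), c v v = c₀ → ∀ v₁ v₂ : Γ, c v₁ v₂ = c₀ → v₁ = v₂)
    (hii : ∀ c₀ : C, ∃ c₀' : C, ∀ v₁ v₂ : Γ, c v₁ v₂ = c₀ → c v₂ v₁ = c₀')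
    (emp : C) (hempty : ¬ NonemptyColor c emp)
    (hne : ∀ c₀ : C, c₀ ≠ emp → NonemptyColor c c₀)
    (R : Γ → Γ → Prop) (hR : ∀ v w : Γ, R v w ↔ NonemptyColor c (c v w))
    (hconn : ∀ v w : Γ, ∃ n : ℕ, dWalk R n v w)
    (φ : Equiv.Perm Γ) (hφ1 : φ ≠ 1)
    (hφc : ∀ v w : Γ, c (φ v) (φ w) = c v w)
    (hffp : ∀ i : ℤ, φ ^ i ≠ 1 → ∀ v : Γ, (φ ^ i) v ≠ v)
    (hmin : ∀ ψ : Equiv.Perm Γ, ψ ≠ 1 → (∀ v w : Γ, c (ψ v) (ψ w) = c v w) →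
      (∀ i : ℤ, ψ ^ i ≠ 1 → ∀ v : Γ, (ψ ^ i) v ≠ v) → orderOf φ ≤ orderOf ψ) :
    Real.logb 2 (ddiam R) - Real.logb 2 ((orderOf φ : ℝ) - 1) - 3 ≤ (WLnum c : ℝ) := by
  classical
  -- Γ is nonempty
  have hΓne : Nonempty Γ := by
    by_contra h
    exact hempty fun v w w' _ _ => ((h ⟨v⟩).elim)
  -- basic colour facts
  have hempty' : ∃ a b b' : Γ, c a b = emp ∧ c a b' = emp ∧ b ≠ b' := by
    by_contra hcon
    apply hempty
    intro a b b' h1 h2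
    by_contra hbb
    exact hcon ⟨a, b, b', h1, h2, hbb⟩
  have hRne : ∀ v w : Γ, R v w → c v w ≠ emp := by
    intro v w hr h
    exact hempty (h ▸ (hR v w).mp hr)
  have hcne : ∀ v w : Γ, c v w ≠ emp → R v w := fun v w h => (hR v w).mpr (hne _ h)
  have hdiagne : ∀ v : Γ, c v v ≠ emp := by
    intro v h
    obtain ⟨a, b, b', h1, h2, hbb⟩ := hempty'
    have e1 : a = b := hi emp v h a b h1
    have e2 : a = b' := hi emp v h a b' h2
    exact hbb (e1 ▸ e2)
  have hRrefl : ∀ v : Γ, R v v := fun v => hcne v v (hdiagne v)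
  -- walk and distance facts
  have hwalk_trans : ∀ (mm : ℕ) (a b : Γ) (nn : ℕ) (e : Γ),
      dWalk R mm a b → dWalk R nn b e → dWalk R (mm + nn) a e := by
    intro mm
    induction mm with
    | zero =>
      intro a b nn e h1 h2
      simp only [dWalk] at h1
      rw [show 0 + nn = nn from by omega, h1]
      exact h2
    | succ mm IH =>
      intro a b nn e h1 h2
      simp only [dWalk] at h1
      rw [show mm + 1 + nn = (mm + nn) + 1 from by omega]
      obtain ⟨u, hu, hw⟩ := h1
      exact ⟨u, hu, IH u b nn e hw h2⟩
  have hreal : ∀ a b : Γ, dWalk R (ddist R a b) a b := fun a b => Nat.sInf_mem (hconn a b)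
  have hdle : ∀ (a b : Γ) (n : ℕ), dWalk R n a b → ddist R a b ≤ n :=
    fun _ _ _ h => Nat.sInf_le h
  have htri : ∀ a b e : Γ, ddist R a e ≤ ddist R a b + ddist R b e :=
    fun a b e => hdle _ _ _ (hwalk_trans _ _ _ _ _ (hreal a b) (hreal b e))
  have hd0 : ∀ a : Γ, ddist R a a = 0 := by
    intro a
    have : dWalk R 0 a a := by simp only [dWalk]
    exact Nat.le_zero.mp (hdle a a 0 this)
  have hd1 : ∀ a b : Γ, R a b → ddist R a b ≤ 1 := by
    intro a b h
    apply hdle a b 1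
    show ∃ u, R a u ∧ dWalk R 0 u b
    exact ⟨b, h, rfl⟩
  have hdemp : ∀ v w : Γ, 1 < ddist R v w → c v w = emp := by
    intro v w h
    by_contra hc
    exact absurd (hd1 v w (hcne v w hc)) (by omega)
  -- zpow invariance
  have hφz : ∀ (r : ℤ) (a b : Γ), c ((φ ^ r) a) ((φ ^ r) b) = c a b := by
    intro r
    induction r using Int.induction_on with
    | zero => intro a b; simp
    | succ n IH =>
      intro a b
      have h1 : ∀ x : Γ, (φ ^ ((n : ℤ) + 1)) x = (φ ^ (n : ℤ)) (φ x) := by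
        intro x
        rw [zpow_add_one]
        rfl
      rw [h1, h1, IH, hφc]
    | pred n IH =>
      intro a b
      have h1 : ∀ x : Γ, (φ ^ (-(n : ℤ) - 1)) x = (φ ^ (-(n : ℤ))) (φ⁻¹ x) := by
        intro x
        rw [zpow_sub_one]
        rfl
      rw [h1, h1, IH]
      have h2 := hφc (φ⁻¹ a) (φ⁻¹ b)
      simpa using h2.symm
  have hcancel : ∀ (r : ℤ) (x : Γ), (φ ^ (-r)) ((φ ^ r) x) = x := by
    intro r x
    have h : (φ ^ (-r)) * (φ ^ r) = 1 := by rw [← zpow_add]; simp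
    rw [← Equiv.Perm.mul_apply, h]
    rfl
  have hcancel' : ∀ (r : ℤ) (x : Γ), (φ ^ r) ((φ ^ (-r)) x) = x := by
    intro r x
    have := hcancel (-r) x
    simpa using this
  have hRz : ∀ (r : ℤ) (a b : Γ), R ((φ ^ r) a) ((φ ^ r) b) ↔ R a b := by
    intro r a b
    rw [hR, hR, hφz]
  have hwz : ∀ (n : ℕ) (r : ℤ) (a b : Γ), dWalk R n a b → dWalk R n ((φ ^ r) a) ((φ ^ r) b) := by
    intro n
    induction n with
    | zero =>
      intro r a b h
      simp only [dWalk] at h ⊢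
      rw [h]
    | succ n IH =>
      intro r a b h
      simp only [dWalk] at h ⊢
      obtain ⟨u, hu, hw⟩ := h
      exact ⟨(φ ^ r) u, (hRz r a u).mpr hu, IH r u b hw⟩
  have hdz : ∀ (r : ℤ) (a b : Γ), ddist R ((φ ^ r) a) ((φ ^ r) b) = ddist R a b := by
    intro r a b
    apply le_antisymm
    · exact hdle _ _ _ (hwz _ r a b (hreal a b))
    · have h2 := hwz _ (-r) _ _ (hreal ((φ ^ r) a) ((φ ^ r) b))
      rw [hcancel r a, hcancel r b] at h2
      exact hdle _ _ _ h2
  -- WL first component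
  have hW0 : ∀ (j : ℕ) (a b a' b' : Γ),
      WLiter c j a b = WLiter c j a' b' → c a b = c a' b' := by
    intro j
    induction j with
    | zero => intro a b a' b' h; exact h
    | succ j IH =>
      intro a b a' b' h
      simp only [WLiter] at h
      exact IH a b a' b' (congrArg Prod.fst h)
  -- WL zpow invariance
  have hWz : ∀ (j : ℕ) (r : ℤ) (a b : Γ),
      WLiter c j ((φ ^ r) a) ((φ ^ r) b) = WLiter c j a b := by
    intro j
    induction j with
    | zero => intro r a b; exact hφz r a b
    | succ j IH =>
      intro r a b
      simp only [WLiter]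
      have h1 : WLiter c j ((φ ^ r) a) ((φ ^ r) b) = WLiter c j a b := IH r a b
      have h2 : (fun γ₁ γ₂ => Nat.card
            {w : Γ // WLiter c j ((φ ^ r) a) w = γ₁ ∧ WLiter c j w ((φ ^ r) b) = γ₂})
          = (fun γ₁ γ₂ => Nat.card
            {w : Γ // WLiter c j a w = γ₁ ∧ WLiter c j w b = γ₂}) := by
        funext γ₁ γ₂
        refine (Nat.card_congr (Equiv.subtypeEquiv (φ ^ r : Equiv.Perm Γ) ?_)).symm
        intro u
        rw [IH r a u, IH r u b]
      rw [h1, h2]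
  -- Lemma L : beyond-horizon orbit indistinguishability
  have hL : ∀ (j : ℕ) (v w : Γ), (∀ r : ℤ, 2 ^ j < ddist R v ((φ ^ r) w)) →
      ∀ i : ℤ, WLiter c j v w = WLiter c j v ((φ ^ i) w) := by
    intro j
    induction j with
    | zero =>
      intro v w hfar i
      show c v w = c v ((φ ^ i) w)
      have h00 : 1 < ddist R v w := by
        have := hfar 0
        rwa [zpow_zero, Equiv.Perm.one_apply, pow_zero] at this
      have h01 : 1 < ddist R v ((φ ^ i) w) := by
        have := hfar i
        rwa [pow_zero] at this
      rw [hdemp v w h00, hdemp v ((φ ^ i) w) h01]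
    | succ j IH =>
      intro v w hfar i
      have hfar' : ∀ r : ℤ, 2 ^ j < ddist R v ((φ ^ r) w) := by
        intro r
        have h1 := hfar r
        have hp : (2 : ℕ) ^ j ≤ 2 ^ (j + 1) := Nat.pow_le_pow_right (by omega) (by omega)
        omega
      have hSmap : ∀ (t : ℤ) (u : Γ), (∃ r : ℤ, ddist R u ((φ ^ r) w) ≤ 2 ^ j) →
          (∃ r : ℤ, ddist R ((φ ^ t) u) ((φ ^ r) w) ≤ 2 ^ j) := by
        rintro t u ⟨r, hr⟩
        refine ⟨t + r, ?_⟩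
        have he : (φ ^ (t + r)) w = (φ ^ t) ((φ ^ r) w) := by
          rw [zpow_add]
          rfl
        rw [he, hdz]
        exact hr
      have hSiff : ∀ u : Γ, (∃ r : ℤ, ddist R ((φ ^ i) u) ((φ ^ r) w) ≤ 2 ^ j)
          ↔ (∃ r : ℤ, ddist R u ((φ ^ r) w) ≤ 2 ^ j) := by
        intro u
        constructor
        · intro h
          have h2 := hSmap (-i) _ h
          rwa [hcancel i u] at h2
        · exact hSmap i u
      set Φe : Equiv.Perm Γ :=
        { toFun := fun u => if (∃ r : ℤ, ddist R u ((φ ^ r) w) ≤ 2 ^ j) then (φ ^ i) u else u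
          invFun := fun u => if (∃ r : ℤ, ddist R u ((φ ^ r) w) ≤ 2 ^ j) then (φ ^ (-i)) u else u
          left_inv := by
            intro u
            by_cases hu : ∃ r : ℤ, ddist R u ((φ ^ r) w) ≤ 2 ^ j
            · simp only [if_pos hu, if_pos ((hSiff u).mpr hu), hcancel]
            · simp only [if_neg hu]
          right_inv := by
            intro u
            by_cases hu : ∃ r : ℤ, ddist R u ((φ ^ r) w) ≤ 2 ^ j
            · simp only [if_pos hu, if_pos (hSmap (-i) u hu), hcancel']
            · simp only [if_neg hu] } with hΦe
      simp only [WLiter]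
      have h1 : WLiter c j v w = WLiter c j v ((φ ^ i) w) := IH v w hfar' i
      have h2 : (fun γ₁ γ₂ => Nat.card
            {u : Γ // WLiter c j v u = γ₁ ∧ WLiter c j u w = γ₂})
          = (fun γ₁ γ₂ => Nat.card
            {u : Γ // WLiter c j v u = γ₁ ∧ WLiter c j u ((φ ^ i) w) = γ₂}) := by
        funext γ₁ γ₂
        refine Nat.card_congr (Equiv.subtypeEquiv Φe ?_)
        intro u
        by_cases hu : ∃ r : ℤ, ddist R u ((φ ^ r) w) ≤ 2 ^ j
        · have e1 : Φe u = (φ ^ i) u := by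
            rw [hΦe]
            simp only [Equiv.coe_fn_mk, if_pos hu]
          rw [e1]
          have hfu : ∀ r : ℤ, 2 ^ j < ddist R v ((φ ^ r) u) := by
            intro r
            obtain ⟨r₀, hr₀⟩ := hu
            have htr := htri v ((φ ^ r) u) ((φ ^ (r + r₀)) w)
            have he : ddist R ((φ ^ r) u) ((φ ^ (r + r₀)) w) = ddist R u ((φ ^ r₀) w) := by
              have h3 : (φ ^ (r + r₀)) w = (φ ^ r) ((φ ^ r₀) w) := by
                rw [zpow_add]
                rfl
              rw [h3, hdz]
            rw [he] at htr
            have h4 := hfar (r + r₀)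
            have h2j : (2 : ℕ) ^ (j + 1) = 2 ^ j + 2 ^ j := by ring
            omega
          have q1 : WLiter c j v ((φ ^ i) u) = WLiter c j v u := (IH v u hfu i).symm
          have q2 : WLiter c j ((φ ^ i) u) ((φ ^ i) w) = WLiter c j u w := hWz j i u w
          rw [q1, q2]
        · have e1 : Φe u = u := by
            rw [hΦe]
            simp only [Equiv.coe_fn_mk, if_neg hu]
          rw [e1]
          have hfu : ∀ r : ℤ, 2 ^ j < ddist R u ((φ ^ r) w) := by
            intro r
            by_contra hcon
            push_neg at hcon
            exact hu ⟨r, hcon⟩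
          have q2 : WLiter c j u ((φ ^ i) w) = WLiter c j u w := (IH u w hfu i).symm
          rw [q2]
      rw [h1, h2]
  -- the stabilization set is nonempty
  have hstabset : ∃ k₀, k₀ ∈ {k | ∀ v₁ v₂ u₁ u₂ : Γ,
      WLiter c (k + 1) v₁ v₂ = WLiter c (k + 1) u₁ u₂ ↔
        WLiter c k v₁ v₂ = WLiter c k u₁ u₂} := by
    by_contra hcon
    push_neg at hcon
    have hstep : ∀ k₀ : ℕ,
        Nat.card (Set.range (fun p : Γ × Γ => WLiter c k₀ p.1 p.2)) <
          Nat.card (Set.range (fun p : Γ × Γ => WLiter c (k₀ + 1) p.1 p.2)) := by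
      intro k₀
      have hni : ¬ ∀ v₁ v₂ u₁ u₂ : Γ,
          WLiter c (k₀ + 1) v₁ v₂ = WLiter c (k₀ + 1) u₁ u₂ ↔
            WLiter c k₀ v₁ v₂ = WLiter c k₀ u₁ u₂ := by
        have := hcon k₀
        simpa [Set.mem_setOf_eq] using this
      have himp : ∀ v₁ v₂ u₁ u₂ : Γ,
          WLiter c (k₀ + 1) v₁ v₂ = WLiter c (k₀ + 1) u₁ u₂ →
            WLiter c k₀ v₁ v₂ = WLiter c k₀ u₁ u₂ := by
        intro v₁ v₂ u₁ u₂ h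
        simp only [WLiter] at h
        exact congrArg Prod.fst h
      push_neg at hni
      obtain ⟨v₁, v₂, u₁, u₂, hiff⟩ := hni
      have hEq : WLiter c k₀ v₁ v₂ = WLiter c k₀ u₁ u₂ ∧
          WLiter c (k₀ + 1) v₁ v₂ ≠ WLiter c (k₀ + 1) u₁ u₂ := by
        rcases hiff with ⟨hA', hB'⟩ | ⟨hA', hB'⟩
        · exact absurd (himp _ _ _ _ hA') hB'
        · exact ⟨hB', hA'⟩
      obtain ⟨hB, hA⟩ := hEq
      have hfst : ∀ p : Γ × Γ, (WLiter c (k₀ + 1) p.1 p.2).1 = WLiter c k₀ p.1 p.2 := by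
        intro p
        simp only [WLiter]
      let π : Set.range (fun p : Γ × Γ => WLiter c (k₀ + 1) p.1 p.2) →
          Set.range (fun p : Γ × Γ => WLiter c k₀ p.1 p.2) := fun x =>
        ⟨x.1.1, by
          obtain ⟨p, hp⟩ := x.2
          exact ⟨p, by
            show WLiter c k₀ p.1 p.2 = (x.1).1
            rw [← hfst p]
            exact congrArg Prod.fst hp⟩⟩
      have hsurj : Function.Surjective π := by
        rintro ⟨y, p, hp⟩
        refine ⟨⟨WLiter c (k₀ + 1) p.1 p.2, ⟨p, rfl⟩⟩, ?_⟩
        apply Subtype.ext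
        show (WLiter c (k₀ + 1) p.1 p.2).1 = y
        rw [hfst p]
        exact hp
      have hninj : ¬ Function.Injective π := by
        intro hinj
        have hx : (⟨WLiter c (k₀ + 1) v₁ v₂, ⟨(v₁, v₂), rfl⟩⟩ :
            Set.range (fun p : Γ × Γ => WLiter c (k₀ + 1) p.1 p.2)) ≠
            ⟨WLiter c (k₀ + 1) u₁ u₂, ⟨(u₁, u₂), rfl⟩⟩ := by
          intro h
          exact hA (congrArg Subtype.val h)
        apply hx
        apply hinj
        apply Subtype.ext
        show (WLiter c (k₀ + 1) v₁ v₂).1 = (WLiter c (k₀ + 1) u₁ u₂).1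
        rw [hfst (v₁, v₂), hfst (u₁, u₂)]
        exact hB
      haveI : Finite (Set.range (fun p : Γ × Γ => WLiter c (k₀ + 1) p.1 p.2)) :=
        (Set.finite_range _).to_subtype
      haveI : Finite (Set.range (fun p : Γ × Γ => WLiter c k₀ p.1 p.2)) :=
        (Set.finite_range _).to_subtype
      have hle : Nat.card (Set.range (fun p : Γ × Γ => WLiter c k₀ p.1 p.2)) ≤
          Nat.card (Set.range (fun p : Γ × Γ => WLiter c (k₀ + 1) p.1 p.2)) :=
        Nat.card_le_card_of_surjective π hsurj
      rcases lt_or_eq_of_le hle with h | h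
      · exact h
      · exfalso
        haveI := Fintype.ofFinite
          (Set.range (fun p : Γ × Γ => WLiter c (k₀ + 1) p.1 p.2))
        haveI := Fintype.ofFinite
          (Set.range (fun p : Γ × Γ => WLiter c k₀ p.1 p.2))
        have hcards : Fintype.card
            (Set.range (fun p : Γ × Γ => WLiter c (k₀ + 1) p.1 p.2)) =
            Fintype.card (Set.range (fun p : Γ × Γ => WLiter c k₀ p.1 p.2)) := by
          rw [← Nat.card_eq_fintype_card, ← Nat.card_eq_fintype_card, h]
        have hbij : Function.Bijective π :=
          (Fintype.bijective_iff_surjective_and_card π).mpr ⟨hsurj, hcards⟩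
        exact hninj hbij.1
    have hmono : ∀ k₀ : ℕ,
        k₀ + 1 ≤ Nat.card (Set.range (fun p : Γ × Γ => WLiter c k₀ p.1 p.2)) := by
      intro k₀
      induction k₀ with
      | zero =>
        haveI : Finite (Set.range (fun p : Γ × Γ => WLiter c 0 p.1 p.2)) :=
          (Set.finite_range _).to_subtype
        haveI : Nonempty (Set.range (fun p : Γ × Γ => WLiter c 0 p.1 p.2)) := by
          obtain ⟨v⟩ := hΓne
          exact ⟨⟨_, ⟨(v, v), rfl⟩⟩⟩
        have := Nat.card_pos (α := Set.range (fun p : Γ × Γ => WLiter c 0 p.1 p.2))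
        omega
      | succ k₀ IH =>
        have h1 := hstep k₀
        omega
    have hbound := hmono (Nat.card (Γ × Γ))
    have hub : Nat.card (Set.range
        (fun p : Γ × Γ => WLiter c (Nat.card (Γ × Γ)) p.1 p.2)) ≤ Nat.card (Γ × Γ) := by
      apply Nat.card_le_card_of_surjective
        (fun p : Γ × Γ => (⟨WLiter c (Nat.card (Γ × Γ)) p.1 p.2, ⟨p, rfl⟩⟩ :
          Set.range (fun p : Γ × Γ => WLiter c (Nat.card (Γ × Γ)) p.1 p.2)))
      rintro ⟨y, p, hp⟩
      exact ⟨p, Subtype.ext hp⟩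
    omega
  have hstab : ∀ v₁ v₂ u₁ u₂ : Γ,
      WLiter c (WLnum c + 1) v₁ v₂ = WLiter c (WLnum c + 1) u₁ u₂ ↔
        WLiter c (WLnum c) v₁ v₂ = WLiter c (WLnum c) u₁ u₂ :=
    Nat.sInf_mem hstabset
  -- walk rigidity
  have hV : ∀ (n : ℕ) (v w w' : Γ), dWalk R n v w →
      WLiter c (WLnum c) v w = WLiter c (WLnum c) v w' → w = w' := by
    intro n
    induction n with
    | zero =>
      intro v w w' hw h
      simp only [dWalk] at hw
      subst hw
      have hc := hW0 (WLnum c) v v v w' h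
      exact hi (c v v) v rfl v w' hc.symm
    | succ n IH =>
      intro v w w' hw h
      simp only [dWalk] at hw
      obtain ⟨u, hvu, hw2⟩ := hw
      have hstep : WLiter c (WLnum c + 1) v w = WLiter c (WLnum c + 1) v w' :=
        (hstab v w v w').mpr h
      simp only [WLiter] at hstep
      have hsnd := congrArg Prod.snd hstep
      have hcard : Nat.card {u₀ : Γ // WLiter c (WLnum c) v u₀ = WLiter c (WLnum c) v u ∧
            WLiter c (WLnum c) u₀ w = WLiter c (WLnum c) u w} =
          Nat.card {u₀ : Γ // WLiter c (WLnum c) v u₀ = WLiter c (WLnum c) v u ∧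
            WLiter c (WLnum c) u₀ w' = WLiter c (WLnum c) u w} :=
        congrFun (congrFun hsnd (WLiter c (WLnum c) v u)) (WLiter c (WLnum c) u w)
      have hpos : 0 < Nat.card {u₀ : Γ // WLiter c (WLnum c) v u₀ = WLiter c (WLnum c) v u ∧
          WLiter c (WLnum c) u₀ w = WLiter c (WLnum c) u w} := by
        haveI : Nonempty {u₀ : Γ // WLiter c (WLnum c) v u₀ = WLiter c (WLnum c) v u ∧
            WLiter c (WLnum c) u₀ w = WLiter c (WLnum c) u w} := ⟨⟨u, rfl, rfl⟩⟩
        exact Nat.card_pos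
      rw [hcard] at hpos
      have hne' : Nonempty {u₀ : Γ // WLiter c (WLnum c) v u₀ = WLiter c (WLnum c) v u ∧
          WLiter c (WLnum c) u₀ w' = WLiter c (WLnum c) u w} := (Nat.card_pos_iff.mp hpos).1
      obtain ⟨⟨u', h1, h2⟩⟩ := hne'
      have hcu : c v u' = c v u := hW0 (WLnum c) v u' v u h1
      have huu : u' = u := hne (c v u) (hRne v u hvu) v u' u hcu rfl
      rw [huu] at h2
      exact IH u w w' hw2 h2.symm
  -- master lemma : every orbit is within the horizon
  have hmaster : ∀ v w : Γ, ∃ r : ℤ, ddist R v ((φ ^ r) w) ≤ 2 ^ (WLnum c) := by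
    intro v w
    by_contra hcon
    push_neg at hcon
    have hL1 := hL (WLnum c) v w (fun r => hcon r) 1
    obtain ⟨n, hwalk⟩ := hconn v w
    have heq := hV n v w ((φ ^ (1 : ℤ)) w) hwalk hL1
    have hne1 : (φ ^ (1 : ℤ)) w ≠ w := hffp 1 (by rw [zpow_one]; exact hφ1) w
    exact hne1 heq.symm
  -- key composition lemma
  have hkey : ∀ (yy u vv : Γ), R u vv → ∀ (β b : ℤ),
      ddist R yy ((φ ^ β) u) ≤ 2 ^ (WLnum c) → ddist R vv ((φ ^ b) yy) ≤ 2 ^ (WLnum c) →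
      ddist R yy ((φ ^ (β + b)) yy) ≤ 2 * 2 ^ (WLnum c) + 1 := by
    intro yy u vv huv β b h1 h2
    have t1 : ddist R ((φ ^ β) u) ((φ ^ β) vv) ≤ 1 := hd1 _ _ ((hRz β u vv).mpr huv)
    have t2 : ddist R ((φ ^ β) vv) ((φ ^ (β + b)) yy) = ddist R vv ((φ ^ b) yy) := by
      have h3 : (φ ^ (β + b)) yy = (φ ^ β) ((φ ^ b) yy) := by
        rw [zpow_add]
        rfl
      rw [h3, hdz]
    have tr1 := htri yy ((φ ^ β) u) ((φ ^ (β + b)) yy)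
    have tr2 := htri ((φ ^ β) u) ((φ ^ β) vv) ((φ ^ (β + b)) yy)
    omega
  -- short nonzero jump at every vertex
  have hshort : ∀ y : Γ, ∃ e : ℤ, (φ ^ e) ≠ 1 ∧
      ddist R y ((φ ^ e) y) ≤ 2 * 2 ^ (WLnum c) + 1 := by
    intro y
    by_contra hcon
    push_neg at hcon
    have hA : ∀ e : ℤ, ddist R y ((φ ^ e) y) ≤ 2 * 2 ^ (WLnum c) + 1 → (φ ^ e) = 1 := by
      intro e hd
      by_contra h1
      have := hcon e h1
      omega
    have hwalkinv : ∀ (n : ℕ) (u vv : Γ), dWalk R n u vv → ∀ (β β' : ℤ),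
        ddist R y ((φ ^ β) u) ≤ 2 ^ (WLnum c) → ddist R y ((φ ^ β') vv) ≤ 2 ^ (WLnum c) →
        (φ ^ β : Equiv.Perm Γ) = φ ^ β' := by
      intro n
      induction n with
      | zero =>
        intro u vv hw β β' h1 h2
        simp only [dWalk] at hw
        subst hw
        obtain ⟨b, hb⟩ := hmaster u y
        have e1 : (φ ^ (β + b) : Equiv.Perm Γ) = 1 := hA _ (hkey y u u (hRrefl u) β b h1 hb)
        have e2 : (φ ^ (β' + b) : Equiv.Perm Γ) = 1 := hA _ (hkey y u u (hRrefl u) β' b h2 hb)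
        have h3 : (φ ^ β) * (φ ^ b) = (φ ^ β') * (φ ^ b) := by
          rw [← zpow_add, ← zpow_add, e1, e2]
        exact mul_right_cancel h3
      | succ n IH =>
        intro u vv hw β β' h1 h2
        simp only [dWalk] at hw
        obtain ⟨u₁, hu1, hw2⟩ := hw
        obtain ⟨β₁, hβ₁⟩ := hmaster y u₁
        obtain ⟨b₁, hb₁⟩ := hmaster u₁ y
        have e1 : (φ ^ (β + b₁) : Equiv.Perm Γ) = 1 := hA _ (hkey y u u₁ hu1 β b₁ h1 hb₁)
        have e2 : (φ ^ (β₁ + b₁) : Equiv.Perm Γ) = 1 :=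
          hA _ (hkey y u₁ u₁ (hRrefl u₁) β₁ b₁ hβ₁ hb₁)
        have e3 : (φ ^ β : Equiv.Perm Γ) = φ ^ β₁ := by
          have h3 : (φ ^ β) * (φ ^ b₁) = (φ ^ β₁) * (φ ^ b₁) := by
            rw [← zpow_add, ← zpow_add, e1, e2]
          exact mul_right_cancel h3
        rw [e3]
        exact IH u₁ vv hw2 β₁ β' hβ₁ h2
    obtain ⟨n, hwalk⟩ := hconn y (φ y)
    have h1 : ddist R y ((φ ^ (0 : ℤ)) y) ≤ 2 ^ (WLnum c) := by
      have h0 : (φ ^ (0 : ℤ)) y = y := by rw [zpow_zero]; rfl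
      rw [h0, hd0]
      exact Nat.zero_le _
    have h2 : ddist R y ((φ ^ (-1 : ℤ)) (φ y)) ≤ 2 ^ (WLnum c) := by
      have h0 : (φ ^ (-1 : ℤ)) (φ y) = y := by
        rw [zpow_neg_one]
        exact φ.symm_apply_apply y
      rw [h0, hd0]
      exact Nat.zero_le _
    have hfin := hwalkinv n y (φ y) hwalk 0 (-1) h1 h2
    rw [zpow_zero, zpow_neg_one] at hfin
    exact hφ1 (inv_eq_one.mp hfin.symm)
  -- order facts
  haveI : Finite (Equiv.Perm Γ) :=
    Finite.of_injective (fun f : Equiv.Perm Γ => (f : Γ → Γ))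
      (fun f g h => Equiv.coe_fn_injective h)
  have hmpos : 0 < orderOf φ := orderOf_pos φ
  have hm1 : orderOf φ ≠ 1 := by simpa [orderOf_eq_one_iff] using hφ1
  have hm2 : 2 ≤ orderOf φ := by omega
  have hprime : Nat.Prime (orderOf φ) := by
    have hpp : Nat.Prime ((orderOf φ).minFac) := Nat.minFac_prime hm1
    have hpd : (orderOf φ).minFac ∣ orderOf φ := Nat.minFac_dvd _
    have hψord : orderOf (φ ^ (orderOf φ / (orderOf φ).minFac)) = (orderOf φ).minFac := by
      rw [orderOf_pow]
      have hdvd : orderOf φ / (orderOf φ).minFac ∣ orderOf φ := Nat.div_dvd_of_dvd hpd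
      rw [Nat.gcd_comm, Nat.gcd_eq_left hdvd]
      exact Nat.div_div_self hpd (by omega)
    have hψne : (φ ^ (orderOf φ / (orderOf φ).minFac)) ≠ 1 := by
      intro h
      rw [h, orderOf_one] at hψord
      exact hpp.ne_one hψord.symm
    have hψc : ∀ v w : Γ, c ((φ ^ (orderOf φ / (orderOf φ).minFac)) v)
        ((φ ^ (orderOf φ / (orderOf φ).minFac)) w) = c v w := by
      intro v w
      have := hφz ((orderOf φ / (orderOf φ).minFac : ℕ) : ℤ) v w
      simpa only [zpow_natCast] using this
    have hψffp : ∀ i : ℤ, (φ ^ (orderOf φ / (orderOf φ).minFac)) ^ i ≠ 1 →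
        ∀ v : Γ, ((φ ^ (orderOf φ / (orderOf φ).minFac)) ^ i) v ≠ v := by
      intro i hne1 v
      have hrw : (φ ^ (orderOf φ / (orderOf φ).minFac)) ^ i =
          φ ^ (((orderOf φ / (orderOf φ).minFac : ℕ) : ℤ) * i) := by
        rw [← zpow_natCast φ (orderOf φ / (orderOf φ).minFac), ← zpow_mul]
      rw [hrw]
      exact hffp _ (by rw [← hrw]; exact hne1) v
    have hle2 := hmin _ hψne hψc hψffp
    rw [hψord] at hle2
    have hple : (orderOf φ).minFac ≤ orderOf φ := Nat.minFac_le (by omega)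
    have heq : (orderOf φ).minFac = orderOf φ := le_antisymm hple hle2
    exact heq ▸ hpp
  -- exponent reduction
  have hφm : ∀ (ψ : Equiv.Perm Γ), ψ ^ (orderOf φ) = 1 → ∀ z : ℤ,
      ψ ^ z = ψ ^ ((z % ((orderOf φ : ℕ) : ℤ)).toNat) := by
    intro ψ h z
    have hm0 : ((orderOf φ : ℕ) : ℤ) ≠ 0 := by
      exact_mod_cast hmpos.ne'
    have hnneg : 0 ≤ z % ((orderOf φ : ℕ) : ℤ) := Int.emod_nonneg z hm0
    rw [← zpow_natCast ψ ((z % ((orderOf φ : ℕ) : ℤ)).toNat), Int.toNat_of_nonneg hnneg]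
    rw [Int.emod_def, zpow_sub, zpow_mul]
    rw [show ψ ^ ((orderOf φ : ℕ) : ℤ) = 1 from by rw [zpow_natCast]; exact h]
    simp
  -- chain bound
  have hchain : ∀ (y : Γ) (e : ℤ) (t : ℕ),
      ddist R y (((φ ^ e) ^ t) y) ≤ t * ddist R y ((φ ^ e) y) := by
    intro y e t
    induction t with
    | zero =>
      have h0 : ((φ ^ e) ^ 0) y = y := by rw [pow_zero]; rfl
      rw [h0, hd0]
      omega
    | succ t IH =>
      have h1 : ((φ ^ e) ^ t) = φ ^ (e * (t : ℤ)) := by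
        rw [← zpow_natCast (φ ^ e) t, ← zpow_mul]
      have hsplit : ((φ ^ e) ^ (t + 1)) y = (φ ^ (e * (t : ℤ))) ((φ ^ e) y) := by
        rw [pow_succ, Equiv.Perm.mul_apply, h1]
      have htr := htri y (((φ ^ e) ^ t) y) (((φ ^ e) ^ (t + 1)) y)
      have hlast : ddist R (((φ ^ e) ^ t) y) (((φ ^ e) ^ (t + 1)) y) =
          ddist R y ((φ ^ e) y) := by
        rw [hsplit, h1, hdz]
      rw [Nat.succ_mul]
      have hIH := IH
      omega
  -- all jumps bounded
  have hjump : ∀ (y : Γ) (f : ℤ),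
      ddist R y ((φ ^ f) y) ≤ (orderOf φ - 1) * (2 * 2 ^ (WLnum c) + 1) := by
    intro y f
    obtain ⟨e, hene, helen⟩ := hshort y
    have hes : φ ^ e = φ ^ ((e % ((orderOf φ : ℕ) : ℤ)).toNat) :=
      hφm φ (pow_orderOf_eq_one φ) e
    have hff : φ ^ f = φ ^ ((f % ((orderOf φ : ℕ) : ℤ)).toNat) :=
      hφm φ (pow_orderOf_eq_one φ) f
    set s : ℕ := (e % ((orderOf φ : ℕ) : ℤ)).toNat with hs
    set f₀ : ℕ := (f % ((orderOf φ : ℕ) : ℤ)).toNat with hf₀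
    have hmz : ((orderOf φ : ℕ) : ℤ) ≠ 0 := by exact_mod_cast hmpos.ne'
    have hslt : s < orderOf φ := by
      have ha : e % ((orderOf φ : ℕ) : ℤ) < ((orderOf φ : ℕ) : ℤ) :=
        Int.emod_lt_of_pos e (by exact_mod_cast hmpos)
      have hb : 0 ≤ e % ((orderOf φ : ℕ) : ℤ) := Int.emod_nonneg e hmz
      omega
    have hsne : s ≠ 0 := by
      intro h0
      apply hene
      rw [hes, h0, pow_zero]
    haveI : NeZero (orderOf φ) := ⟨by omega⟩
    haveI : Fact (Nat.Prime (orderOf φ)) := ⟨hprime⟩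
    have hsnz : ((s : ℕ) : ZMod (orderOf φ)) ≠ 0 := by
      intro h0
      rw [ZMod.natCast_eq_zero_iff] at h0
      have := Nat.le_of_dvd (by omega) h0
      omega
    set t : ℕ := (((f₀ : ZMod (orderOf φ))) * (s : ZMod (orderOf φ))⁻¹).val with htdef
    have htlt : t < orderOf φ := ZMod.val_lt _
    have hcast : ((s * t : ℕ) : ZMod (orderOf φ)) = ((f₀ : ℕ) : ZMod (orderOf φ)) := by
      push_cast
      rw [htdef, ZMod.natCast_rightInverse _]
      calc (s : ZMod (orderOf φ)) * ((f₀ : ZMod (orderOf φ)) * (s : ZMod (orderOf φ))⁻¹)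
          = (f₀ : ZMod (orderOf φ)) * ((s : ZMod (orderOf φ)) * (s : ZMod (orderOf φ))⁻¹) := by
            ring
        _ = (f₀ : ZMod (orderOf φ)) := by rw [mul_inv_cancel₀ hsnz, mul_one]
    have hmodeq : s * t ≡ f₀ [MOD orderOf φ] := (ZMod.natCast_eq_natCast_iff _ _ _).mp hcast
    have hpow : φ ^ (s * t) = φ ^ f₀ := (pow_eq_pow_iff_modEq).mpr hmodeq
    have hrw : ((φ ^ e) ^ t) = φ ^ f := by
      rw [hes, ← pow_mul, hpow, ← hff]
    have hch := hchain y e t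
    rw [hrw] at hch
    calc ddist R y ((φ ^ f) y) ≤ t * ddist R y ((φ ^ e) y) := hch
      _ ≤ (orderOf φ - 1) * (2 * 2 ^ (WLnum c) + 1) := Nat.mul_le_mul (by omega) helen
  -- distance bound
  have hdistbound : ∀ x y : Γ,
      ddist R x y ≤ 2 ^ (WLnum c) + (orderOf φ - 1) * (2 * 2 ^ (WLnum c) + 1) := by
    intro x y
    obtain ⟨r, hr⟩ := hmaster x y
    have h2 : ddist R ((φ ^ r) y) y = ddist R y ((φ ^ (-r)) y) := by
      have h3 := hdz r y ((φ ^ (-r)) y)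
      rw [hcancel' r y] at h3
      exact h3
    have htr := htri x ((φ ^ r) y) y
    have hj := hjump y (-r)
    omega
  have hdiam : ddiam R ≤ 2 ^ (WLnum c) + (orderOf φ - 1) * (2 * 2 ^ (WLnum c) + 1) := by
    apply csSup_le
    · obtain ⟨v⟩ := hΓne
      exact ⟨_, ⟨(v, v), rfl⟩⟩
    · rintro b ⟨p, rfl⟩
      exact hdistbound p.1 p.2
  -- final real arithmetic
  have hmc : (1 : ℝ) ≤ (orderOf φ : ℝ) - 1 := by
    have h2 : (2 : ℝ) ≤ (orderOf φ : ℝ) := by exact_mod_cast hm2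
    linarith
  by_cases hD : ddiam R = 0
  · rw [hD]
    simp only [Nat.cast_zero, Real.logb_zero]
    have h1 : 0 ≤ Real.logb 2 ((orderOf φ : ℝ) - 1) := Real.logb_nonneg (by norm_num) hmc
    have h2 : (0 : ℝ) ≤ (WLnum c : ℝ) := Nat.cast_nonneg _
    linarith
  · have hD1 : 1 ≤ ddiam R := Nat.one_le_iff_ne_zero.mpr hD
    have hcastm : ((orderOf φ - 1 : ℕ) : ℝ) = (orderOf φ : ℝ) - 1 := by
      rw [Nat.cast_sub (by omega), Nat.cast_one]
    have hDle : (ddiam R : ℝ) ≤ ((orderOf φ : ℝ) - 1) * 2 ^ (WLnum c + 2) := by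
      have hn : ddiam R ≤ (orderOf φ - 1) * 2 ^ (WLnum c + 2) := by
        have hH1 : 1 ≤ 2 ^ (WLnum c) := Nat.one_le_two_pow
        have hm1' : 1 ≤ orderOf φ - 1 := by omega
        calc ddiam R ≤ 2 ^ (WLnum c) + (orderOf φ - 1) * (2 * 2 ^ (WLnum c) + 1) := hdiam
          _ ≤ (orderOf φ - 1) * 2 ^ (WLnum c) +
              (orderOf φ - 1) * (2 * 2 ^ (WLnum c) + 1) := by
            have := Nat.le_mul_of_pos_left (2 ^ (WLnum c)) (show 0 < orderOf φ - 1 by omega)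
            omega
          _ = (orderOf φ - 1) * (3 * 2 ^ (WLnum c) + 1) := by ring
          _ ≤ (orderOf φ - 1) * (4 * 2 ^ (WLnum c)) := Nat.mul_le_mul_left _ (by omega)
          _ = (orderOf φ - 1) * 2 ^ (WLnum c + 2) := by ring
      calc (ddiam R : ℝ) ≤ ((orderOf φ - 1 : ℕ) : ℝ) * ((2 : ℝ) ^ (WLnum c + 2)) := by
            exact_mod_cast hn
        _ = ((orderOf φ : ℝ) - 1) * 2 ^ (WLnum c + 2) := by rw [hcastm]
    have hlog1 : Real.logb 2 (ddiam R) ≤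
        Real.logb 2 (((orderOf φ : ℝ) - 1) * 2 ^ (WLnum c + 2)) := by
      apply Real.logb_le_logb_of_le (by norm_num : (1 : ℝ) < 2)
        (by exact_mod_cast hD1 : (0 : ℝ) < (ddiam R : ℝ)) hDle
    have hlog2 : Real.logb 2 (((orderOf φ : ℝ) - 1) * 2 ^ (WLnum c + 2)) =
        Real.logb 2 ((orderOf φ : ℝ) - 1) + (WLnum c + 2 : ℝ) := by
      rw [Real.logb_mul (by linarith : ((orderOf φ : ℝ) - 1) ≠ 0)
        (by positivity : ((2 : ℝ) ^ (WLnum c + 2)) ≠ 0)]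
      rw [Real.logb_pow, Real.logb_self_eq_one (by norm_num : (1 : ℝ) < 2)]
      push_cast
      ring
    rw [hlog2] at hlog1
    linarith
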